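/- Let f : ℝ^d → ℝ be differentiable, α ∈ (0,1), and suppose for all w, w' ∈ ℝ^d, ‖∇f(w')-∇f(w)‖ ≤ ‖w'-w‖·(K₀ + K₁‖∇f(w)‖^α + K₂‖w'-w‖^{α/(1-α)}) with constants K₀, K₁, K₂ ≥ 0. Then for all w, w', f(w') ≤ f(w) + ⟨∇f(w), w'-w⟩ + (1/2)‖w'-w‖²·(K₀ + K₁‖∇f(w)‖^α + 2K₂‖w'-w‖^{α/(1-α)}). -/

import Mathlib

open RealInnerProductSpace

theorem descent_lemma_poly {d : ℕ}
    (f : EuclideanSpace ℝ (Fin d) → ℝ) (hf : Differentiable ℝ f)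
    (α K₀ K₁ K₂ : ℝ) (hα : α ∈ Set.Ioo (0:ℝ) 1)
    (hK₀ : 0 ≤ K₀) (hK₁ : 0 ≤ K₁) (hK₂ : 0 ≤ K₂)
    (hsmooth : ∀ w w' : EuclideanSpace ℝ (Fin d),
      ‖gradient f w' - gradient f w‖ ≤
        ‖w' - w‖ * (K₀ + K₁ * ‖gradient f w‖ ^ α + K₂ * ‖w' - w‖ ^ (α / (1 - α)))) :
    ∀ w w' : EuclideanSpace ℝ (Fin d),
      f w' ≤ f w + ⟪gradient f w, w' - w⟫ +
        (1/2) * ‖w' - w‖ ^ 2 *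
          (K₀ + K₁ * ‖gradient f w‖ ^ α + 2 * K₂ * ‖w' - w‖ ^ (α / (1 - α))) := by
  intro w w'
  set v : EuclideanSpace ℝ (Fin d) := w' - w with hv
  set G : EuclideanSpace ℝ (Fin d) := gradient f w with hG
  set p : ℝ := α / (1 - α) with hp
  have hp0 : 0 ≤ p := div_nonneg hα.1.le (by linarith [hα.2])
  set C : ℝ := K₀ + K₁ * ‖G‖ ^ α + K₂ * ‖v‖ ^ p with hC
  have hC0 : 0 ≤ C := by
    have := Real.rpow_nonneg (norm_nonneg G) α
    have := Real.rpow_nonneg (norm_nonneg v) p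
    positivity
  -- the auxiliary function
  set φ : ℝ → ℝ := fun t => f (w + t • v) - t * ⟪G, v⟫ - t ^ 2 / 2 * (‖v‖ ^ 2 * C) with hφ
  have hline : ∀ t : ℝ, HasDerivAt (fun s : ℝ => w + s • v) v t := by
    intro t
    simpa using ((hasDerivAt_id t).smul_const v).const_add w
  have hderiv : ∀ t : ℝ, HasDerivAt φ
      (⟪gradient f (w + t • v), v⟫ - ⟪G, v⟫ - t * (‖v‖ ^ 2 * C)) t := by
    intro t
    have h1 : HasDerivAt (fun s : ℝ => f (w + s • v)) ⟪gradient f (w + t • v), v⟫ t := by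
      have h2 := ((hf (w + t • v)).hasGradientAt).hasFDerivAt
      have := h2.comp_hasDerivAt t (hline t)
      simpa [InnerProductSpace.toDual_apply_apply, Function.comp_def] using this
    have h3 : HasDerivAt (fun s : ℝ => s * ⟪G, v⟫) ⟪G, v⟫ t := by
      simpa using (hasDerivAt_id t).mul_const (⟪G, v⟫ : ℝ)
    have h4 : HasDerivAt (fun s : ℝ => s ^ 2 / 2 * (‖v‖ ^ 2 * C)) (t * (‖v‖ ^ 2 * C)) t := by
      have : HasDerivAt (fun s : ℝ => s ^ 2 / 2) t t := by
        have := (hasDerivAt_pow 2 t).div_const 2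
        simpa using this
      simpa [mul_comm, mul_assoc] using this.mul_const (‖v‖ ^ 2 * C)
    exact (h1.sub h3).sub h4
  have hbound : ∀ t ∈ Set.Icc (0:ℝ) 1,
      ⟪gradient f (w + t • v), v⟫ - ⟪G, v⟫ - t * (‖v‖ ^ 2 * C) ≤ 0 := by
    intro t ht
    have key : ⟪gradient f (w + t • v) - G, v⟫ ≤ t * (‖v‖ ^ 2 * C) := by
      have h1 : ⟪gradient f (w + t • v) - G, v⟫ ≤ ‖gradient f (w + t • v) - G‖ * ‖v‖ :=
        real_inner_le_norm _ _
      have h2 := hsmooth w (w + t • v)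
      have hsub : w + t • v - w = t • v := by abel
      rw [hsub] at h2
      have hnorm : ‖t • v‖ = t * ‖v‖ := by
        rw [norm_smul, Real.norm_eq_abs, abs_of_nonneg ht.1]
      rw [hnorm] at h2
      have htp : (t * ‖v‖) ^ p ≤ ‖v‖ ^ p := by
        apply Real.rpow_le_rpow (mul_nonneg ht.1 (norm_nonneg v)) _ hp0
        nlinarith [norm_nonneg v, ht.2]
      have hCle : K₀ + K₁ * ‖G‖ ^ α + K₂ * (t * ‖v‖) ^ p ≤ C := by
        rw [hC]
        have := mul_le_mul_of_nonneg_left htp hK₂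
        linarith
      have h3 : ‖gradient f (w + t • v) - G‖ ≤ t * ‖v‖ * C :=
        h2.trans (by
          apply mul_le_mul_of_nonneg_left hCle (mul_nonneg ht.1 (norm_nonneg v)))
      calc ⟪gradient f (w + t • v) - G, v⟫ ≤ ‖gradient f (w + t • v) - G‖ * ‖v‖ := h1
        _ ≤ t * ‖v‖ * C * ‖v‖ := by
            apply mul_le_mul_of_nonneg_right h3 (norm_nonneg v)
        _ = t * (‖v‖ ^ 2 * C) := by ring
    have hinner : ⟪gradient f (w + t • v) - G, v⟫ = ⟪gradient f (w + t • v), v⟫ - ⟪G, v⟫ :=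
      inner_sub_left _ _ _
    linarith [hinner ▸ key]
  have hanti : AntitoneOn φ (Set.Icc 0 1) := by
    apply antitoneOn_of_deriv_nonpos (convex_Icc 0 1)
    · exact (continuous_iff_continuousAt.mpr fun t =>
        (hderiv t).differentiableAt.continuousAt).continuousOn
    · intro t _
      exact (hderiv t).differentiableAt.differentiableWithinAt
    · intro t ht
      rw [(hderiv t).deriv]
      exact hbound t (Set.mem_of_mem_of_subset ht (interior_subset))
  have h01 : φ 1 ≤ φ 0 := hanti (Set.left_mem_Icc.mpr zero_le_one)
      (Set.right_mem_Icc.mpr zero_le_one) zero_le_one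
  have hφ1 : φ 1 = f w' - ⟪G, v⟫ - 1 / 2 * (‖v‖ ^ 2 * C) := by
    simp [hφ, hv]
  have hφ0 : φ 0 = f w := by simp [hφ]
  have hmain : f w' ≤ f w + ⟪G, v⟫ + 1 / 2 * ‖v‖ ^ 2 * C := by
    rw [hφ1, hφ0] at h01
    linarith
  have hfinal : 1 / 2 * ‖v‖ ^ 2 * C ≤
      1 / 2 * ‖v‖ ^ 2 * (K₀ + K₁ * ‖G‖ ^ α + 2 * K₂ * ‖v‖ ^ p) := by
    apply mul_le_mul_of_nonneg_left _ (by positivity)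
    have : 0 ≤ K₂ * ‖v‖ ^ p := mul_nonneg hK₂ (Real.rpow_nonneg (norm_nonneg v) p)
    rw [hC]; linarith
  linarith
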